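/- Let A be a p×q real matrix of rank r and let k ≥ r. With respect to the probability measure on q×k real matrices under which all entries are independent standard Gaussian random variables, for almost every R the column space of the product A·R equals the column space of A; in particular, rank(A·R) = r almost surely. -/

import Mathlib

open MeasureTheory ProbabilityTheory Set Module

section Aux

/-- The product of standard Gaussians is absolutely continuous w.r.t. Lebesgue measure. -/
lemma pi_gaussian_ac (n : ℕ) :
    (Measure.pi fun _ : Fin n => gaussianReal 0 1) ≪ (volume : Measure (Fin n → ℝ)) := by
  induction n with
  | zero =>
    have h1 : (Measure.pi fun _ : Fin 0 => gaussianReal 0 1) = Measure.dirac (fun i => i.elim0) :=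
      Measure.pi_of_empty _ _
    have h2 : (volume : Measure (Fin 0 → ℝ)) = Measure.dirac (fun i => i.elim0) :=
      Measure.pi_of_empty _ _
    rw [h1, h2]
  | succ n ih =>
    set e := MeasurableEquiv.piFinSuccAbove (fun _ : Fin (n + 1) => ℝ) 0 with he
    have hg : MeasurePreserving e (Measure.pi fun _ : Fin (n + 1) => gaussianReal 0 1)
        ((gaussianReal 0 1).prod (Measure.pi fun _ : Fin n => gaussianReal 0 1)) :=
      measurePreserving_piFinSuccAbove (fun _ : Fin (n + 1) => gaussianReal 0 1) 0
    have hv : MeasurePreserving e (volume : Measure (Fin (n + 1) → ℝ))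
        ((volume : Measure ℝ).prod (volume : Measure (Fin n → ℝ))) :=
      measurePreserving_piFinSuccAbove (fun _ : Fin (n + 1) => (volume : Measure ℝ)) 0
    have hac : ((gaussianReal 0 1).prod (Measure.pi fun _ : Fin n => gaussianReal 0 1)) ≪
        ((volume : Measure ℝ).prod (volume : Measure (Fin n → ℝ))) :=
      (gaussianReal_absolutelyContinuous 0 one_ne_zero).prod ih
    rw [← (MeasurePreserving.symm e hg).map_eq, ← (MeasurePreserving.symm e hv).map_eq]
    exact hac.map e.symm.measurable

/-- A Gaussian vector almost surely maps outside any proper subspace of the range. -/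
lemma ae_escape {p q : ℕ} (A : Matrix (Fin p) (Fin q) ℝ)
    (V : Submodule ℝ (Fin p → ℝ)) (hV : V < LinearMap.range A.mulVecLin) :
    ∀ᵐ x ∂(Measure.pi fun _ : Fin q => gaussianReal 0 1), A.mulVec x ∉ V := by
  have hS : Submodule.comap A.mulVecLin V ≠ ⊤ := by
    intro h
    exact hV.ne (le_antisymm hV.le (LinearMap.range_le_iff_comap.mpr h))
  have h0 : (volume : Measure (Fin q → ℝ)) (Submodule.comap A.mulVecLin V : Set (Fin q → ℝ)) = 0 :=
    Measure.addHaar_submodule _ _ hS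
  have h1 : (Measure.pi fun _ : Fin q => gaussianReal 0 1)
      (Submodule.comap A.mulVecLin V : Set (Fin q → ℝ)) = 0 := pi_gaussian_ac q h0
  rw [ae_iff]
  refine measure_mono_null ?_ h1
  intro x hx
  simp only [Set.mem_setOf_eq, not_not] at hx
  simpa [Submodule.mem_comap] using hx

/-- Finrank of span in terms of linearly independent subfamilies. -/
lemma le_finrank_span_iff {m : ℕ} {ι F : Type*} [Fintype ι] [AddCommGroup F]
    [Module ℝ F] [FiniteDimensional ℝ F] (v : ι → F) :
    m ≤ finrank ℝ (Submodule.span ℝ (Set.range v)) ↔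
      ∃ g : Fin m → ι, LinearIndependent ℝ (v ∘ g) := by
  constructor
  · intro h
    obtain ⟨t, hsub, hspan, hli⟩ := exists_linearIndependent ℝ (Set.range v)
    have htfin : t.Finite := (Set.finite_range v).subset hsub
    haveI : Fintype t := htfin.fintype
    have hcard : finrank ℝ (Submodule.span ℝ t) = t.toFinset.card :=
      finrank_span_set_eq_card hli
    have hm : m ≤ Fintype.card ↥t := by
      rw [Set.toFinset_card] at hcard
      rw [← hcard, hspan]
      exact h
    obtain ⟨f⟩ : Nonempty (Fin m ↪ ↥t) :=
      Function.Embedding.nonempty_of_card_le (by simpa using hm)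
    choose g hg using fun i : Fin m => hsub (f i).2
    refine ⟨g, ?_⟩
    have hvg : v ∘ g = (fun x : t => (x : F)) ∘ f := by
      funext i; simp [Function.comp, hg i]
    rw [hvg]
    exact hli.comp f f.injective
  · rintro ⟨g, hg⟩
    have h1 : finrank ℝ (Submodule.span ℝ (Set.range (v ∘ g))) = m := by
      simpa using finrank_span_eq_card hg
    calc m = finrank ℝ (Submodule.span ℝ (Set.range (v ∘ g))) := h1.symm
      _ ≤ finrank ℝ (Submodule.span ℝ (Set.range v)) :=
        Submodule.finrank_mono (Submodule.span_mono (Set.range_comp_subset_range g v))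

/-- The set where the span of a continuously-varying family has finrank at least `m` is open. -/
lemma isOpen_le_finrank_span {m : ℕ} {X ι F : Type*} [TopologicalSpace X] [Fintype ι]
    [NormedAddCommGroup F] [NormedSpace ℝ F] [FiniteDimensional ℝ F]
    {v : X → ι → F} (hv : Continuous v) :
    IsOpen {x | m ≤ finrank ℝ (Submodule.span ℝ (Set.range (v x)))} := by
  have hset : {x | m ≤ finrank ℝ (Submodule.span ℝ (Set.range (v x)))} =
      ⋃ g : Fin m → ι, (fun x => v x ∘ g) ⁻¹' {f : Fin m → F | LinearIndependent ℝ f} := by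
    ext x
    simp only [Set.mem_setOf_eq, Set.mem_iUnion, Set.mem_preimage, le_finrank_span_iff]
  rw [hset]
  refine isOpen_iUnion fun g => isOpen_setOf_linearIndependent.preimage ?_
  exact continuous_pi fun i => (continuous_apply (g i)).comp hv

/-- Main induction: `k` i.i.d. Gaussian columns mapped through `A` span a subspace of
dimension at least `min k (rank A)`, almost surely. -/
lemma ae_min_le_finrank_span (p q : ℕ) (A : Matrix (Fin p) (Fin q) ℝ) (k : ℕ) :
    ∀ᵐ R ∂(Measure.pi fun _ : Fin q => Measure.pi fun _ : Fin k => gaussianReal 0 1),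
      min k A.rank ≤
        finrank ℝ (Submodule.span ℝ (Set.range fun j : Fin k => A.mulVec fun l => R l j)) := by
  induction k with
  | zero => simp
  | succ k ih =>
    set ν := Measure.pi fun _ : Fin q => gaussianReal 0 1 with hν
    set μk := Measure.pi fun _ : Fin q => Measure.pi fun _ : Fin k => gaussianReal 0 1 with hμk
    set e1 := MeasurableEquiv.piFinSuccAbove (fun _ : Fin (k + 1) => ℝ) 0 with he1
    set ψ : (Fin q → Fin (k + 1) → ℝ) ≃ᵐ (Fin q → ℝ) × (Fin q → Fin k → ℝ) :=
      (MeasurableEquiv.piCongrRight fun _ : Fin q => e1).trans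
        (MeasurableEquiv.arrowProdEquivProdArrow ℝ (Fin k → ℝ) (Fin q)) with hψdef
    have hψ : MeasurePreserving ψ
        (Measure.pi fun _ : Fin q => Measure.pi fun _ : Fin (k + 1) => gaussianReal 0 1)
        (ν.prod μk) :=
      (measurePreserving_arrowProdEquivProdArrow ℝ (Fin k → ℝ) (Fin q)
        (fun _ => gaussianReal 0 1) (fun _ => Measure.pi fun _ : Fin k => gaussianReal 0 1)).comp
        (measurePreserving_pi _ _ fun _ =>
          measurePreserving_piFinSuccAbove (fun _ : Fin (k + 1) => gaussianReal 0 1) 0)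
    -- the target set is open, hence measurable
    set G : Set (Fin q → Fin (k + 1) → ℝ) := {R | min (k + 1) A.rank ≤
      finrank ℝ (Submodule.span ℝ (Set.range fun j : Fin (k + 1) => A.mulVec fun l => R l j))}
      with hGdef
    have hcont : Continuous fun (R : Fin q → Fin (k + 1) → ℝ) =>
        fun j : Fin (k + 1) => A.mulVec fun l => R l j :=
      continuous_pi fun j => A.mulVecLin.continuous_of_finiteDimensional.comp
        (continuous_pi fun l => (continuous_apply j).comp (continuous_apply l))
    have hGopen : IsOpen G := isOpen_le_finrank_span hcont
    rw [ae_iff]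
    have hGc : {R | ¬ min (k + 1) A.rank ≤
        finrank ℝ (Submodule.span ℝ (Set.range fun j : Fin (k + 1) => A.mulVec fun l => R l j))}
        = Gᶜ := rfl
    rw [hGc]
    set B : Set ((Fin q → ℝ) × (Fin q → Fin k → ℝ)) := ψ.symm ⁻¹' Gᶜ with hBdef
    have hBmeas : MeasurableSet B := ψ.symm.measurable hGopen.measurableSet.compl
    have h1 : (Measure.pi fun _ : Fin q => Measure.pi fun _ : Fin (k + 1) => gaussianReal 0 1) Gᶜ
        = (ν.prod μk) B := by
      have hmp := hψ.measure_preimage_equiv B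
      have hpre : ⇑ψ ⁻¹' B = Gᶜ := by
        rw [hBdef, ← Set.preimage_comp]
        simp
      rw [← hpre]
      exact hmp
    have hswap : MeasurePreserving Prod.swap (μk.prod ν) (ν.prod μk) :=
      MeasureTheory.Measure.measurePreserving_swap
    have h2 : (ν.prod μk) B = (μk.prod ν) (Prod.swap ⁻¹' B) :=
      (hswap.measure_preimage hBmeas.nullMeasurableSet).symm
    rw [h1, h2]
    rw [MeasureTheory.Measure.measure_prod_null (hBmeas.preimage measurable_swap)]
    -- now use the inductive hypothesis
    filter_upwards [ih] with R' hR'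
    set V := Submodule.span ℝ (Set.range fun j : Fin k => A.mulVec fun l => R' l j) with hVdef
    -- describe the combined matrix
    have hcomb : ∀ x : Fin q → ℝ, ∀ i, ψ.symm (x, R') i = Fin.insertNth 0 (x i) (R' i) := by
      intro x i
      rfl
    have hcol0 : ∀ x : Fin q → ℝ, (fun l => ψ.symm (x, R') l (0 : Fin (k + 1))) = x := by
      intro x; funext i; rw [hcomb]; simp
    have hcols : ∀ x : Fin q → ℝ, ∀ j : Fin k,
        (fun l => ψ.symm (x, R') l j.succ) = fun l => R' l j := by
      intro x j; funext i; rw [hcomb]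
      have : j.succ = (0 : Fin (k + 1)).succAbove j := by simp
      rw [this, Fin.insertNth_apply_succAbove]
    -- V is contained in the new span, and the new span contains `A.mulVec x`
    have hVle : ∀ x : Fin q → ℝ, V ≤ Submodule.span ℝ
        (Set.range fun j : Fin (k + 1) => A.mulVec fun l => ψ.symm (x, R') l j) := by
      intro x
      rw [hVdef, Submodule.span_le]
      rintro - ⟨j, rfl⟩
      show A.mulVec (fun l => R' l j) ∈ _
      rw [← hcols x j]
      exact Submodule.subset_span ⟨j.succ, rfl⟩
    have hxmem : ∀ x : Fin q → ℝ, A.mulVec x ∈ Submodule.span ℝ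
        (Set.range fun j : Fin (k + 1) => A.mulVec fun l => ψ.symm (x, R') l j) := by
      intro x
      rw [← hcol0 x]
      exact Submodule.subset_span ⟨0, rfl⟩
    by_cases hρ : A.rank ≤ finrank ℝ V
    · -- the slice is empty
      have : (Prod.mk R' ⁻¹' (Prod.swap ⁻¹' B) : Set (Fin q → ℝ)) = ∅ := by
        ext x
        simp only [Set.mem_preimage, Set.mem_empty_iff_false, iff_false, hBdef,
          Set.mem_compl_iff, Prod.swap_prod_mk, not_not, hGdef, Set.mem_setOf_eq]
        calc min (k + 1) A.rank ≤ A.rank := min_le_right _ _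
          _ ≤ finrank ℝ V := hρ
          _ ≤ _ := Submodule.finrank_mono (hVle x)
      rw [this]; simp
    · -- V is a proper subspace of the range of A
      push_neg at hρ
      have hVlt : V < LinearMap.range A.mulVecLin := by
        refine lt_of_le_of_ne ?_ ?_
        · rw [hVdef, Submodule.span_le]
          rintro - ⟨j, rfl⟩
          exact ⟨fun l => R' l j, rfl⟩

        · intro hcontr
          rw [hcontr, Matrix.rank] at hρ
          exact lt_irrefl _ hρ
      have hesc := ae_escape A V hVlt
      rw [ae_iff] at hesc
      refine measure_mono_null ?_ hesc
      intro x hx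
      simp only [Set.mem_preimage, Prod.swap_prod_mk, hBdef, Set.mem_compl_iff, hGdef,
        Set.mem_setOf_eq] at hx
      simp only [Set.mem_setOf_eq, not_not]
      by_contra hxV
      apply hx
      have hlt : V < Submodule.span ℝ
          (Set.range fun j : Fin (k + 1) => A.mulVec fun l => ψ.symm (x, R') l j) :=
        lt_of_le_of_ne (hVle x) (fun hcontr => hxV (hcontr ▸ hxmem x))
      have hrank : finrank ℝ V <
          finrank ℝ (Submodule.span ℝ
            (Set.range fun j : Fin (k + 1) => A.mulVec fun l => ψ.symm (x, R') l j)) :=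
        Submodule.finrank_lt_finrank_of_lt hlt
      have hminV : min k A.rank ≤ finrank ℝ V := hR'
      have h1 : min k A.rank = k := by omega
      omega

end Aux

theorem randomized_range_finder (p q k r : ℕ)
    (A : Matrix (Fin p) (Fin q) ℝ) (hA : A.rank = r) (hk : r ≤ k) :
    ∀ᵐ R ∂(Measure.pi fun _ : Fin q => Measure.pi fun _ : Fin k => gaussianReal 0 1),
      LinearMap.range (A * Matrix.of R).mulVecLin = LinearMap.range A.mulVecLin ∧
      (A * Matrix.of R).rank = r := by
  filter_upwards [ae_min_le_finrank_span p q A k] with R hR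
  have hcols : (Matrix.transpose (A * Matrix.of R))
      = fun j : Fin k => A.mulVec fun l => R l j := by
    funext j i
    simp [Matrix.mulVec, Matrix.mul_apply, Matrix.transpose_apply, dotProduct]
  have hge : r ≤ (A * Matrix.of R).rank := by
    rw [Matrix.rank_eq_finrank_span_cols, show (A * Matrix.of R).col = _ from hcols]
    calc r = min k A.rank := by rw [hA]; omega
      _ ≤ _ := hR
  have hle : (A * Matrix.of R).rank ≤ r := hA ▸ A.rank_mul_le_left _
  have hrank : (A * Matrix.of R).rank = r := le_antisymm hle hge
  refine ⟨?_, hrank⟩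
  have hsub : LinearMap.range (A * Matrix.of R).mulVecLin ≤ LinearMap.range A.mulVecLin := by
    rw [Matrix.mulVecLin_mul]
    exact LinearMap.range_comp_le_range _ _
  refine Submodule.eq_of_le_of_finrank_eq hsub ?_
  show (A * Matrix.of R).rank = A.rank
  rw [hrank, hA]
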